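/- Fix α > 0 and r > 0, and for R > 0 define θ_r^R(y) = arccos(max(−1, (cosh(r)cosh(y) − cosh(R))/(sinh(r)sinh(y)))) for y ∈ (0,R). Let h_R(x) for x ∈ (0,1) be the unique positive solution of (cosh(α h) − 1)/(cosh(α R) − 1) = x. Then for every fixed x ∈ (0,1), as R → ∞, θ_r^R(h_R(x)) converges to arccos(max(−1, (cosh(r) − x^{−1/α})/sinh(r))). -/

import Mathlib

open Real Filter

/-- Inverse hyperbolic cosine: `arcosh x = log (x + √(x² - 1))`. -/
noncomputable def arcosh (x : ℝ) : ℝ := Real.log (x + Real.sqrt (x ^ 2 - 1))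

/-- `h_R(x)`: the unique positive solution of `(cosh(αh) − 1)/(cosh(αR) − 1) = x`. -/
noncomputable def hRx (α R x : ℝ) : ℝ := _root_.arcosh (1 + x * (Real.cosh (α * R) - 1)) / α

/-- The half angular width of the ball `B((r,0),R)` at radius `y`. -/
noncomputable def thetaR (R r y : ℝ) : ℝ :=
  Real.arccos (max (-1)
    ((Real.cosh r * Real.cosh y - Real.cosh R) / (Real.sinh r * Real.sinh y)))

/-- For fixed `α > 0`, `r > 0` and `x ∈ (0,1)`, as `R → ∞`,
`θ_r^R(h_R(x)) → arccos(max(−1, (cosh r − x^{−1/α})/sinh r))`. -/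
lemma aux_shift (α x : ℝ) (hα : 0 < α) (hx0 : 0 < x) :
    Tendsto (fun R => hRx α R x - R) atTop (nhds (Real.log x / α)) := by
  set u : ℝ → ℝ := fun R => 1 + x * (Real.cosh (α * R) - 1) with hu_def
  have hone_le : ∀ R, 1 ≤ u R := by
    intro R
    have h := Real.one_le_cosh (α * R)
    have : u R = 1 + x * (Real.cosh (α * R) - 1) := rfl
    nlinarith
  have htt : Tendsto (fun R : ℝ => α * R) atTop atTop :=
    Tendsto.const_mul_atTop hα tendsto_id
  have he : Tendsto (fun R : ℝ => Real.exp (-(α * R))) atTop (nhds 0) :=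
    Real.tendsto_exp_atBot.comp (tendsto_neg_atTop_atBot.comp htt)
  have he2 : Tendsto (fun R : ℝ => Real.exp (-(2 * (α * R)))) atTop (nhds 0) := by
    refine Real.tendsto_exp_atBot.comp (tendsto_neg_atTop_atBot.comp ?_)
    exact Tendsto.const_mul_atTop two_pos htt
  have hU : Tendsto (fun R => u R * Real.exp (-(α * R))) atTop (nhds (x / 2)) := by
    have hid : ∀ R, u R * Real.exp (-(α * R)) =
        (1 - x) * Real.exp (-(α * R)) + x * (1 + Real.exp (-(2 * (α * R)))) / 2 := by
      intro R
      rw [hu_def]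
      simp only
      rw [Real.cosh_eq, show (-(2 * (α * R))) = (-(α*R)) + (-(α*R)) by ring,
        Real.exp_add, Real.exp_neg]
      have := Real.exp_ne_zero (α * R)
      field_simp
      ring
    simp only [hid]
    have : Tendsto (fun R => (1 - x) * Real.exp (-(α * R)) +
        x * (1 + Real.exp (-(2 * (α * R)))) / 2) atTop
        (nhds ((1 - x) * 0 + x * (1 + 0) / 2)) :=
      ((tendsto_const_nhds.mul he)).add (((tendsto_const_nhds.add he2).const_mul x).div_const 2)
    convert this using 2
    ring
  have hS : Tendsto (fun R => Real.sqrt ((u R) ^ 2 - 1) * Real.exp (-(α * R))) atTop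
      (nhds (x / 2)) := by
    have hid : ∀ R, Real.sqrt ((u R) ^ 2 - 1) * Real.exp (-(α * R)) =
        Real.sqrt ((u R * Real.exp (-(α * R))) ^ 2 - (Real.exp (-(α * R))) ^ 2) := by
      intro R
      have h1 : (0:ℝ) ≤ (u R) ^ 2 - 1 := by nlinarith [hone_le R]
      rw [show (u R * Real.exp (-(α * R))) ^ 2 - (Real.exp (-(α * R))) ^ 2 =
        ((u R) ^ 2 - 1) * (Real.exp (-(α * R))) ^ 2 by ring,
        Real.sqrt_mul h1, Real.sqrt_sq (Real.exp_pos _).le]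
    simp only [hid]
    have hin : Tendsto (fun R => (u R * Real.exp (-(α * R))) ^ 2 - (Real.exp (-(α * R))) ^ 2)
        atTop (nhds ((x / 2) ^ 2 - 0 ^ 2)) := (hU.pow 2).sub (he.pow 2)
    have := (Real.continuous_sqrt.tendsto _).comp hin
    simp only [Function.comp_def] at this
    convert this using 2
    rw [show ((0:ℝ)) ^ 2 = 0 by norm_num, sub_zero, Real.sqrt_sq (by positivity)]
  have hg : Tendsto (fun R => (u R + Real.sqrt ((u R) ^ 2 - 1)) * Real.exp (-(α * R)))
      atTop (nhds x) := by
    have := hU.add hS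
    norm_num at this
    convert this using 2
    ring
  have hlog : Tendsto (fun R => Real.log ((u R + Real.sqrt ((u R) ^ 2 - 1)) *
      Real.exp (-(α * R)))) atTop (nhds (Real.log x)) :=
    ((Real.continuousAt_log hx0.ne').tendsto).comp hg
  have key : ∀ R, hRx α R x - R = Real.log ((u R + Real.sqrt ((u R) ^ 2 - 1)) *
      Real.exp (-(α * R))) / α := by
    intro R
    have hpos : (0:ℝ) < u R + Real.sqrt ((u R) ^ 2 - 1) := by
      have := Real.sqrt_nonneg ((u R) ^ 2 - 1)
      linarith [hone_le R]
    rw [Real.log_mul hpos.ne' (Real.exp_ne_zero _), Real.log_exp]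
    unfold hRx _root_.arcosh
    rw [hu_def]
    field_simp
    ring
  simp only [key]
  exact hlog.div_const α


lemma aux_ratio (t R r : ℝ) :
    (Real.cosh r * Real.cosh t - Real.cosh R) / (Real.sinh r * Real.sinh t) =
    (Real.cosh r * (1 + Real.exp (-(2 * t))) -
      (Real.exp (-(t - R)) + Real.exp (-R - t))) /
    (Real.sinh r * (1 - Real.exp (-(2 * t)))) := by
  have hnum : Real.cosh r * (1 + Real.exp (-(2 * t))) -
      (Real.exp (-(t - R)) + Real.exp (-R - t)) =
      (Real.cosh r * Real.cosh t - Real.cosh R) * (2 * Real.exp (-t)) := by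
    rw [Real.cosh_eq t, Real.cosh_eq R,
      show (-(2 * t)) = (-t) + (-t) by ring,
      show (-(t - R)) = R + (-t) by ring,
      show (-R - t) = (-R) + (-t) by ring,
      Real.exp_add, Real.exp_add, Real.exp_add, Real.exp_neg, Real.exp_neg]
    have h1 := Real.exp_ne_zero t
    have h2 := Real.exp_ne_zero R
    field_simp
  have hden : Real.sinh r * (1 - Real.exp (-(2 * t))) =
      (Real.sinh r * Real.sinh t) * (2 * Real.exp (-t)) := by
    rw [Real.sinh_eq t, show (-(2 * t)) = (-t) + (-t) by ring,
      Real.exp_add, Real.exp_neg]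
    have h1 := Real.exp_ne_zero t
    field_simp
  rw [hnum, hden, mul_div_mul_right _ _ (by positivity : (2:ℝ) * Real.exp (-t) ≠ 0)]

theorem stmt_10 (α r x : ℝ) (hα : 0 < α) (hr : 0 < r) (hx : x ∈ Set.Ioo (0:ℝ) 1) :
    Tendsto (fun R : ℝ => thetaR R r (hRx α R x)) atTop
      (nhds (Real.arccos (max (-1)
        ((Real.cosh r - x ^ (-(1 / α))) / Real.sinh r)))) := by
  obtain ⟨hx0, _⟩ := hx
  set y : ℝ → ℝ := fun R => hRx α R x with hy_def
  set δ : ℝ := Real.log x / α with hδ_def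
  have hd : Tendsto (fun R => y R - R) atTop (nhds δ) := aux_shift α x hα hx0
  have hyTop : Tendsto y atTop atTop := by
    have := hd.add_atTop (tendsto_id (α := ℝ))
    refine this.congr (fun R => by simp)
  have hA : Tendsto (fun R => Real.exp (-(y R - R))) atTop (nhds (Real.exp (-δ))) :=
    (Real.continuous_exp.tendsto _).comp hd.neg
  have hB : Tendsto (fun R => Real.exp (-(2 * y R))) atTop (nhds 0) :=
    Real.tendsto_exp_atBot.comp
      (tendsto_neg_atTop_atBot.comp (Tendsto.const_mul_atTop two_pos hyTop))
  have hC : Tendsto (fun R => Real.exp (-R - y R)) atTop (nhds 0) := by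
    refine Real.tendsto_exp_atBot.comp ?_
    have h1 : Tendsto (fun R => R + y R) atTop atTop :=
      Tendsto.atTop_add_atTop (tendsto_id (α := ℝ)) hyTop
    have := tendsto_neg_atTop_atBot.comp h1
    exact this.congr (fun R => by simp [Function.comp]; ring)
  -- the inner ratio tends to (cosh r - exp(-δ)) / sinh r
  have hf : Tendsto (fun R =>
      (Real.cosh r * Real.cosh (y R) - Real.cosh R) / (Real.sinh r * Real.sinh (y R)))
      atTop (nhds ((Real.cosh r - Real.exp (-δ)) / Real.sinh r)) := by
    have hnum : Tendsto (fun R => Real.cosh r * (1 + Real.exp (-(2 * y R))) -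
        (Real.exp (-(y R - R)) + Real.exp (-R - y R))) atTop
        (nhds (Real.cosh r * (1 + 0) - (Real.exp (-δ) + 0))) :=
      (tendsto_const_nhds.mul (tendsto_const_nhds.add hB)).sub (hA.add hC)
    have hden : Tendsto (fun R => Real.sinh r * (1 - Real.exp (-(2 * y R)))) atTop
        (nhds (Real.sinh r * (1 - 0))) :=
      tendsto_const_nhds.mul (tendsto_const_nhds.sub hB)
    have hsinh : Real.sinh r * (1 - 0) ≠ 0 := by
      have := Real.sinh_pos_iff.2 hr
      simp only [sub_zero, mul_one]
      exact this.ne'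
    have := hnum.div hden hsinh
    refine (this.congr (fun R => (aux_ratio (y R) R r).symm)).congr' ?_ |>.mono_right ?_
    · rfl
    · simp
  have hexp : Real.exp (-δ) = x ^ (-(1 / α)) := by
    rw [Real.rpow_def_of_pos hx0, hδ_def]
    congr 1
    ring
  have hcont : Continuous fun z : ℝ => Real.arccos (max (-1) z) :=
    Real.continuous_arccos.comp (continuous_const.max continuous_id)
  have := (hcont.tendsto ((Real.cosh r - Real.exp (-δ)) / Real.sinh r)).comp hf
  rw [hexp] at this
  exact this.congr (fun R => rfl)
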